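/- Let $n$ be a normalizer of $D(E)$ in $A_R(G_E)$ over an integral domain $R$ and let $x \in \operatorname{dom}(n)$ be an isolated infinite path. Then $n p_x n^* = n n^* p_{\alpha_n(x)}$ and $n p_x = p_{\alpha_n(x)} n$. -/
import Mathlib


open scoped Classical BigOperators

namespace LPA

structure DirGraph where
  V : Type
  E : Type
  r : E → V
  s : E → V

structure InfPath (G : DirGraph) where
  edges : ℕ → G.E
  compat : ∀ i, G.s (edges i) = G.r (edges (i + 1))

structure FinPath (G : DirGraph) where
  len : ℕ
  vtx : G.V
  edges : ℕ → G.E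
  compat : ∀ i, i + 1 < len → G.s (edges i) = G.r (edges (i + 1))
  vtx_eq : 0 < len → vtx = G.r (edges 0)

variable {G : DirGraph}

/-- The source vertex of a finite path (its `vtx` if it has length `0`). -/
def FinPath.src (μ : FinPath G) : G.V :=
  if μ.len = 0 then μ.vtx else G.s (μ.edges (μ.len - 1))

/-- The range vertex of an infinite path. -/
def InfPath.rng (x : InfPath G) : G.V := G.r (x.edges 0)

/-- `x ∼ₖ y`: shift equivalence with lag `k`. -/
def ShiftEquiv (x : InfPath G) (k : ℤ) (y : InfPath G) : Prop :=
  ∃ a b N : ℕ, (a : ℤ) - (b : ℤ) = k ∧ ∀ i, N ≤ i → x.edges (i + a) = y.edges (i + b)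

def RowFinite (G : DirGraph) : Prop := ∀ v : G.V, {e : G.E | G.r e = v}.Finite

def NoSources (G : DirGraph) : Prop := ∀ v : G.V, ∃ e : G.E, G.r e = v

/-- `x = μ z`: the infinite path `x` is the concatenation of the finite path `μ`
with the infinite path `z`. -/
def IsConcat (μ : FinPath G) (z x : InfPath G) : Prop :=
  z.rng = μ.src ∧ ∀ i, x.edges i = if i < μ.len then μ.edges i else z.edges (i - μ.len)

/-- `ρ = μ β`: concatenation of finite paths. -/
def IsAppendF (μ β ρ : FinPath G) : Prop :=
  ρ.len = μ.len + β.len ∧ (∀ i < μ.len, ρ.edges i = μ.edges i) ∧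
    (∀ i < β.len, ρ.edges (μ.len + i) = β.edges i) ∧
    ρ.vtx = if μ.len = 0 then β.vtx else μ.vtx

/-- Triples `(x, k, y)`: the ambient type of the graph groupoid. -/
abbrev GTrip (G : DirGraph) := InfPath G × ℤ × InfPath G

def gmul (g h : GTrip G) : GTrip G := (g.1, g.2.1 + h.2.1, h.2.2)
def ginv (g : GTrip G) : GTrip G := (g.2.2, -g.2.1, g.1)
def unit (x : InfPath G) : GTrip G := (x, 0, x)

def GraphGroupoid (G : DirGraph) : Set (GTrip G) :=
  {g | ShiftEquiv g.1 g.2.1 g.2.2}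

/-- `BC` for subsets of the groupoid. -/
def setMul (B C : Set (GTrip G)) : Set (GTrip G) :=
  {g | ∃ γ ∈ B, ∃ η ∈ C, γ.2.2 = η.1 ∧ g = gmul γ η}

def setInv (B : Set (GTrip G)) : Set (GTrip G) := ginv '' B

/-- The cylinder set `Z(μ)` of infinite paths extending `μ`. -/
def Zset (μ : FinPath G) : Set (InfPath G) :=
  {x | (∀ i < μ.len, x.edges i = μ.edges i) ∧ x.rng = μ.vtx}

/-- The basic compact open bisection `Z(μ,ν) = {(μz, |μ|-|ν|, νz)}`. -/
def ZZ (μ ν : FinPath G) : Set (GTrip G) :=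
  {g | ∃ z : InfPath G, IsConcat μ z g.1 ∧ IsConcat ν z g.2.2 ∧
    g.2.1 = (μ.len : ℤ) - (ν.len : ℤ)}

instance : TopologicalSpace (InfPath G) :=
  TopologicalSpace.generateFrom {S | ∃ μ : FinPath G, S = Zset μ}

def unitSet (S : Set (InfPath G)) : Set (GTrip G) := {g | ∃ x ∈ S, g = unit x}

variable (R : Type) [CommRing R]

/-- The diagonal `D(E)` of the Steinberg algebra. -/
noncomputable def Diag (G : DirGraph) : Submodule R (GTrip G → R) :=
  Submodule.span R {f | ∃ μ : FinPath G, f = Set.indicator (unitSet (Zset μ)) 1}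

/-- The Steinberg algebra `A_R(G_E)` as a set of functions on the groupoid. -/
noncomputable def Steinberg (G : DirGraph) : Submodule R (GTrip G → R) :=
  Submodule.span R
    {f | ∃ μ ν : FinPath G, μ.src = ν.src ∧ f = Set.indicator (ZZ μ ν) 1}

variable {R}

/-- Convolution product. -/
noncomputable def conv (f g : GTrip G → R) : GTrip G → R :=
  fun γ => ∑ᶠ η ∈ {η : GTrip G | η.1 = γ.1}, f η * g (gmul (ginv η) γ)

/-- Involution `f^*(γ) = star (f (γ⁻¹))`. -/
def starf [StarRing R] (f : GTrip G → R) : GTrip G → R :=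
  fun γ => star (f (ginv γ))

/-- `n` is a normalizer of the diagonal. -/
def IsNormalizer [StarRing R] (n : GTrip G → R) : Prop :=
  n ∈ Steinberg R G ∧ ∀ d ∈ Diag R G,
    conv (conv n d) (starf n) ∈ Diag R G ∧ conv (conv (starf n) d) n ∈ Diag R G

/-- `α_n(x) = r(supp(n) x)` (given by a choice; unique for normalizers). -/
noncomputable def alphaFun (n : GTrip G → R) (x : InfPath G) : InfPath G :=
  if h : ∃ g : GTrip G, n g ≠ 0 ∧ g.2.2 = x then h.choose.1 else x

/-- `dom(n) = supp(n^* n)`, as a subset of the infinite path space. -/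
noncomputable def domSet [StarRing R] (n : GTrip G → R) : Set (InfPath G) :=
  {x | conv (starf n) n (unit x) ≠ 0}

/-- `ran(n) = supp(n n^*)`, as a subset of the infinite path space. -/
noncomputable def ranSet [StarRing R] (n : GTrip G → R) : Set (InfPath G) :=
  {x | conv n (starf n) (unit x) ≠ 0}

/-- `d ∘ α_n`, viewed as a function on the groupoid vanishing off `s(supp n)`. -/
noncomputable def dAlpha (d n : GTrip G → R) : GTrip G → R := fun g =>
  if (g.2.1 = 0 ∧ g.1 = g.2.2 ∧ ∃ h : GTrip G, n h ≠ 0 ∧ h.2.2 = g.2.2)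
  then d (unit (alphaFun n g.2.2)) else 0

/-- `p_x`, the characteristic function of the unit `{x}`. -/
noncomputable def ppt (R : Type) [CommRing R] (x : InfPath G) : GTrip G → R :=
  Set.indicator {unit x} 1

/-- `f` is homogeneous of degree `k`. -/
def Homog (k : ℤ) (f : GTrip G → R) : Prop := ∀ g : GTrip G, f g ≠ 0 → g.2.1 = k

def IsCycle (η : FinPath G) : Prop :=
  0 < η.len ∧ η.src = η.vtx ∧
    ∀ i j, 0 < i → i + 1 < η.len → 0 < j → j + 1 < η.len → i ≠ j →
      G.s (η.edges i) ≠ G.r (η.edges j)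

def HasEntrance (η : FinPath G) : Prop :=
  ∃ (e : G.E) (i : ℕ), i < η.len ∧ G.r e = G.r (η.edges i) ∧ e ≠ η.edges i

/-- `z = η η η ⋯`. -/
def IsPeriodicOf (η : FinPath G) (z : InfPath G) : Prop :=
  ∀ i, z.edges i = η.edges (i % η.len)

section AuxNp

theorem finsum_mem_single' {α M : Type*} [AddCommMonoid M] {S : Set α} {f : α → M} {a : α}
    (ha : a ∈ S) (h : ∀ b ∈ S, b ≠ a → f b = 0) : (∑ᶠ b ∈ S, f b) = f a := by
  rw [finsum_mem_def, finsum_eq_single _ a]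
  · simp [Set.indicator_of_mem ha]
  · intro b hb
    by_cases hbS : b ∈ S
    · simp [Set.indicator_of_mem hbS, h b hbS hb]
    · simp [Set.indicator_of_notMem hbS]

variable {G : DirGraph} {R : Type} [CommRing R]

theorem InfPath.ext' {x y : InfPath G} (h : ∀ i, x.edges i = y.edges i) : x = y := by
  obtain ⟨e, c⟩ := x; obtain ⟨e', c'⟩ := y
  have : e = e' := funext h
  subst this; rfl

theorem conv_apply (f g : GTrip G → R) (γ : GTrip G) :
    conv f g γ = ∑ᶠ η ∈ {η : GTrip G | η.1 = γ.1}, f η * g (gmul (ginv η) γ) := rfl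

theorem ginv_gmul_ginv (η γ : GTrip G) :
    ginv (gmul (ginv η) γ) = (γ.2.2, η.2.1 - γ.2.1, η.2.2) := by
  exact Prod.ext rfl (Prod.ext (show -(-η.2.1 + γ.2.1) = η.2.1 - γ.2.1 by ring) rfl)

theorem gmul_ginv_self (g : GTrip G) : gmul (ginv g) g = unit g.2.2 :=
  Prod.ext rfl (Prod.ext (show -g.2.1 + g.2.1 = 0 by ring) rfl)

theorem gmul_ginv_unit (g : GTrip G) : gmul (ginv (unit g.1)) g = g :=
  Prod.ext rfl (Prod.ext (show -(0:ℤ) + g.2.1 = g.2.1 by ring) rfl)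

theorem diag_supp {f : GTrip G → R} (hf : f ∈ Diag R G) :
    ∀ g : GTrip G, f g ≠ 0 → g = unit g.1 := by
  refine Submodule.span_induction ?_ ?_ ?_ ?_ hf
  · rintro f ⟨μ, rfl⟩ g hg
    have hmem : g ∈ unitSet (Zset μ) := by
      by_contra h
      rw [Set.indicator_of_notMem h] at hg
      exact hg rfl
    obtain ⟨w, _, rfl⟩ := hmem
    rfl
  · intro g hg; exact absurd rfl hg
  · intro a b _ _ ha hb g hg
    by_cases h : a g = 0
    · refine hb g ?_
      intro h0
      exact hg (by simp only [Pi.add_apply, h, h0, add_zero])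
    · exact ha g h
  · intro r a _ ha g hg
    exact ha g fun h0 => hg (by simp only [Pi.smul_apply, h0, smul_zero])

theorem steinberg_fiber_fin {n : GTrip G → R} (hn : n ∈ Steinberg R G) (w : InfPath G) :
    {g : GTrip G | n g ≠ 0 ∧ g.2.2 = w}.Finite := by
  refine Submodule.span_induction ?_ ?_ ?_ ?_ hn
  · rintro f ⟨μ, ν, -, rfl⟩
    refine Set.Subsingleton.finite ?_
    rintro g ⟨hg, hgw⟩ g' ⟨hg', hg'w⟩
    have hgZ : g ∈ ZZ μ ν := by
      by_contra h; rw [Set.indicator_of_notMem h] at hg; exact hg rfl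
    have hg'Z : g' ∈ ZZ μ ν := by
      by_contra h; rw [Set.indicator_of_notMem h] at hg'; exact hg' rfl
    obtain ⟨z, hz1, hz2, hzk⟩ := hgZ
    obtain ⟨z', hz1', hz2', hzk'⟩ := hg'Z
    have hzz : z = z' := by
      refine InfPath.ext' fun j => ?_
      have h1 := hz2.2 (j + ν.len)
      have h2 := hz2'.2 (j + ν.len)
      rw [hgw] at h1; rw [hg'w] at h2
      rw [if_neg (by omega), Nat.add_sub_cancel] at h1 h2
      rw [← h1, h2]
    have h1 : g.1 = g'.1 := by
      refine InfPath.ext' fun i => ?_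
      rw [hz1.2 i, hz1'.2 i, hzz]
    exact Prod.ext h1 (Prod.ext (hzk.trans hzk'.symm) (hgw.trans hg'w.symm))
  · simpa using Set.finite_empty
  · intro a b _ _ ha hb
    refine Set.Finite.subset (ha.union hb) ?_
    rintro g ⟨hg, hgw⟩
    by_cases h : a g = 0
    · exact Or.inr ⟨fun h0 => hg (by simp [Pi.add_apply, h, h0]), hgw⟩
    · exact Or.inl ⟨h, hgw⟩
  · intro r a _ ha
    refine Set.Finite.subset ha ?_
    rintro g ⟨hg, hgw⟩
    exact ⟨fun h0 => hg (by simp [Pi.smul_apply, h0]), hgw⟩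


theorem conv_diag_right {f d : GTrip G → R} (hd : ∀ z : GTrip G, d z ≠ 0 → z = unit z.1)
    (g : GTrip G) : conv f d g = f g * d (unit g.2.2) := by
  rw [conv_apply]
  rw [finsum_mem_single' (S := {η : GTrip G | η.1 = g.1}) (a := g) rfl ?_]
  · rw [gmul_ginv_self]
  · intro b hb hbg
    by_cases hd0 : d (gmul (ginv b) g) = 0
    · rw [hd0, mul_zero]
    · exfalso
      apply hbg
      have hu := hd _ hd0
      have h1 : b.2.2 = g.2.2 := (congrArg (fun z => z.2.2) hu).symm
      have h2 : -b.2.1 + g.2.1 = 0 := congrArg (fun z => z.2.1) hu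
      exact Prod.ext hb (Prod.ext (by omega) h1)

theorem conv_diag_left {f d : GTrip G → R} (hd : ∀ z : GTrip G, d z ≠ 0 → z = unit z.1)
    (g : GTrip G) : conv d f g = d (unit g.1) * f g := by
  rw [conv_apply]
  rw [finsum_mem_single' (S := {η : GTrip G | η.1 = g.1}) (a := unit g.1) rfl ?_]
  · rw [gmul_ginv_unit]
  · intro b hb hbg
    by_cases hd0 : d b = 0
    · rw [hd0, zero_mul]
    · exact absurd ((hd b hd0).trans (by rw [hb])) hbg

theorem ppt_supp (x : InfPath G) : ∀ z : GTrip G, ppt R x z ≠ 0 → z = unit z.1 := by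
  intro z hz
  have hmem : z ∈ ({unit x} : Set (GTrip G)) := by
    by_contra h
    rw [ppt, Set.indicator_of_notMem h] at hz
    exact hz rfl
  rw [Set.mem_singleton_iff] at hmem
  rw [hmem]; rfl

theorem unit_inj {x w : InfPath G} (h : (unit x : GTrip G) = unit w) : x = w :=
  congrArg (fun z => z.1) h

theorem ppt_unit (x w : InfPath G) : ppt R x (unit w) = if w = x then 1 else 0 := by
  by_cases h : w = x
  · rw [if_pos h, h, ppt, Set.indicator_of_mem (Set.mem_singleton _)]; rfl
  · rw [if_neg h, ppt, Set.indicator_of_notMem]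
    intro hmem
    exact h (unit_inj (Set.mem_singleton_iff.mp hmem))

theorem conv_ppt_right (f : GTrip G → R) (x : InfPath G) (g : GTrip G) :
    conv f (ppt R x) g = if g.2.2 = x then f g else 0 := by
  rw [conv_diag_right (ppt_supp x), ppt_unit]
  by_cases h : g.2.2 = x
  · rw [if_pos h, if_pos h, mul_one]
  · rw [if_neg h, if_neg h, mul_zero]

theorem unit_mem_unitSet_iff {S : Set (InfPath G)} {w : InfPath G} :
    (unit w : GTrip G) ∈ unitSet S ↔ w ∈ S := by
  constructor
  · rintro ⟨w', hw', h⟩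
    rwa [unit_inj h]
  · intro h; exact ⟨w, h, rfl⟩

theorem unitSet_supp (S : Set (InfPath G)) :
    ∀ z : GTrip G, Set.indicator (unitSet S) (1 : GTrip G → R) z ≠ 0 → z = unit z.1 := by
  intro z hz
  have hmem : z ∈ unitSet S := by
    by_contra h
    rw [Set.indicator_of_notMem h] at hz
    exact hz rfl
  obtain ⟨w, _, rfl⟩ := hmem
  rfl

theorem unitSet_ind_unit (S : Set (InfPath G)) (w : InfPath G) :
    Set.indicator (unitSet S) (1 : GTrip G → R) (unit w) = if w ∈ S then 1 else 0 := by
  by_cases h : w ∈ S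
  · rw [if_pos h, Set.indicator_of_mem (unit_mem_unitSet_iff.mpr h)]; rfl
  · rw [if_neg h, Set.indicator_of_notMem (fun hc => h (unit_mem_unitSet_iff.mp hc))]

theorem exists_cyl {x : InfPath G} (hx : IsOpen ({x} : Set (InfPath G))) :
    ∃ μ : FinPath G, Zset μ = {x} := by
  have key : ∀ U : Set (InfPath G),
      TopologicalSpace.GenerateOpen {S | ∃ μ : FinPath G, S = Zset μ} U →
      x ∈ U → ∃ μ : FinPath G, x ∈ Zset μ ∧ Zset μ ⊆ U := by
    intro U hU
    induction hU with
    | basic S hS =>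
      intro hxS
      obtain ⟨μ, rfl⟩ := hS
      exact ⟨μ, hxS, subset_rfl⟩
    | univ =>
      intro _
      exact ⟨⟨0, x.rng, x.edges, fun i hi => absurd hi (Nat.not_lt_zero _),
        fun h => absurd h (lt_irrefl 0)⟩,
        ⟨fun i hi => absurd hi (Nat.not_lt_zero _), rfl⟩, Set.subset_univ _⟩
    | inter U V hU hV ihU ihV =>
      intro hxUV
      obtain ⟨μ, hxμ, hμ⟩ := ihU hxUV.1
      obtain ⟨ν, hxν, hν⟩ := ihV hxUV.2
      refine ⟨⟨max μ.len ν.len, x.rng, x.edges, fun i _ => x.compat i, fun _ => rfl⟩,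
        ⟨fun i _ => rfl, rfl⟩, ?_⟩
      rintro w ⟨hw1, hw2⟩
      constructor
      · exact hμ ⟨fun i hi => (hw1 i (lt_of_lt_of_le hi (le_max_left _ _))).trans (hxμ.1 i hi),
          hw2.trans hxμ.2⟩
      · exact hν ⟨fun i hi => (hw1 i (lt_of_lt_of_le hi (le_max_right _ _))).trans (hxν.1 i hi),
          hw2.trans hxν.2⟩
    | sUnion S hS ih =>
      rintro ⟨U, hUS, hxU⟩
      obtain ⟨μ, h1, h2⟩ := ih U hUS hxU
      exact ⟨μ, h1, h2.trans (Set.subset_sUnion_of_mem hUS)⟩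
  obtain ⟨μ, hxμ, hsub⟩ := key _ hx rfl
  exact ⟨μ, Set.Subset.antisymm hsub (Set.singleton_subset_iff.mpr hxμ)⟩

theorem unitSet_singleton (x : InfPath G) : unitSet ({x} : Set (InfPath G)) = {unit x} := by
  ext g
  constructor
  · rintro ⟨w, hw, rfl⟩
    rw [Set.mem_singleton_iff.mp hw]; rfl
  · rintro rfl
    exact ⟨x, rfl, rfl⟩
theorem starf_gmul [StarRing R] (n : GTrip G → R) (η γ : GTrip G) :
    starf n (gmul (ginv η) γ) = star (n ((γ.2.2, η.2.1 - γ.2.1, η.2.2) : GTrip G)) := by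
  rw [show starf n (gmul (ginv η) γ) = star (n (ginv (gmul (ginv η) γ))) from rfl, ginv_gmul_ginv]

theorem key_iff [IsDomain R] [StarRing R] {n : GTrip G → R} (hn : IsNormalizer n)
    {x : InfPath G} (hx : IsOpen ({x} : Set (InfPath G))) (hxd : x ∈ domSet n) :
    ∀ g : GTrip G, n g ≠ 0 → (g.2.2 = x ↔ g.1 = alphaFun n x) := by
  obtain ⟨μ, hμ⟩ := exists_cyl hx
  have hpx : ppt R x ∈ Diag R G :=
    Submodule.subset_span ⟨μ, by rw [ppt, hμ, unitSet_singleton]⟩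
  have hTne : ∃ g : GTrip G, n g ≠ 0 ∧ g.2.2 = x := by
    by_contra h
    push_neg at h
    refine hxd ?_
    show conv (starf n) n (unit x) = 0
    rw [conv_apply]
    apply finsum_mem_of_eqOn_zero
    intro η hη
    have h0 : n (gmul (ginv η) (unit x)) = 0 := by
      by_contra hc
      exact h _ hc rfl
    show starf n η * n (gmul (ginv η) (unit x)) = 0
    rw [h0, mul_zero]
  have hα : alphaFun n x = hTne.choose.1 := dif_pos hTne
  have hg₀n : n hTne.choose ≠ 0 := hTne.choose_spec.1
  have hg₀x : hTne.choose.2.2 = x := hTne.choose_spec.2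
  have Tfin : ∀ w : InfPath G, {g : GTrip G | n g ≠ 0 ∧ g.2.2 = w}.Finite :=
    fun w => steinberg_fiber_fin hn.1 w
  have lagfin : ∀ (y' w : InfPath G), {k : ℤ | n ((y', k, w) : GTrip G) ≠ 0}.Finite := by
    intro y' w
    have hsub : {k : ℤ | n ((y', k, w) : GTrip G) ≠ 0} ⊆
        (fun k : ℤ => ((y', k, w) : GTrip G)) ⁻¹' {g : GTrip G | n g ≠ 0 ∧ g.2.2 = w} :=
      fun k hk => ⟨hk, rfl⟩
    refine Set.Finite.subset (Set.Finite.preimage ?_ (Tfin w)) hsub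
    intro p _ q _ hpq
    exact congrArg (fun g : GTrip G => g.2.1) hpq
  -- Claim A : uniqueness of the range over source x
  have claimA : ∀ g g' : GTrip G, n g ≠ 0 → n g' ≠ 0 → g.2.2 = x → g'.2.2 = x →
      g.1 = g'.1 := by
    intro g g' hg hg' hgx hg'x
    by_contra hne
    have hqD := (hn.2 (ppt R x) hpx).1
    obtain ⟨a, haS, hamax⟩ := Set.exists_max_image {k : ℤ | n ((g.1, k, x) : GTrip G) ≠ 0}
      id (lagfin _ _) ⟨g.2.1, by rw [Set.mem_setOf_eq, ← hgx]; exact hg⟩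
    obtain ⟨b, hbS, hbmin⟩ := Set.exists_min_image {k : ℤ | n ((g'.1, k, x) : GTrip G) ≠ 0}
      id (lagfin _ _) ⟨g'.2.1, by rw [Set.mem_setOf_eq, ← hg'x]; exact hg'⟩
    simp only [Set.mem_setOf_eq, id_eq] at haS hbS hamax hbmin
    have hq0 : conv (conv n (ppt R x)) (starf n) ((g.1, a - b, g'.1) : GTrip G) = 0 := by
      by_contra hc
      have hu := diag_supp hqD _ hc
      exact hne (congrArg (fun z : GTrip G => z.2.2) hu).symm
    have hval : conv (conv n (ppt R x)) (starf n) ((g.1, a - b, g'.1) : GTrip G) =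
        n ((g.1, a, x) : GTrip G) * star (n ((g'.1, b, x) : GTrip G)) := by
      rw [conv_apply]
      rw [finsum_mem_single' (S := {η : GTrip G | η.1 = ((g.1, a - b, g'.1) : GTrip G).1})
        (a := ((g.1, a, x) : GTrip G)) rfl ?_]
      · rw [conv_ppt_right, if_pos rfl, starf_gmul]
        simp only [sub_sub_cancel]
      · intro η hη hη0
        rw [conv_ppt_right]
        by_cases h22 : η.2.2 = x
        · rw [if_pos h22]
          by_cases hn0 : n η = 0
          · rw [hn0, zero_mul]
          · rw [starf_gmul]
            by_cases hn1 : n ((((g.1, a - b, g'.1) : GTrip G).2.2,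
                η.2.1 - ((g.1, a - b, g'.1) : GTrip G).2.1, η.2.2) : GTrip G) = 0
            · rw [hn1, star_zero, mul_zero]
            · exfalso
              apply hη0
              have hη1 : η.1 = g.1 := hη
              have hmem1 : n ((g.1, η.2.1, x) : GTrip G) ≠ 0 := by
                rw [← hη1, ← h22]; exact hn0
              have hle : η.2.1 ≤ a := hamax _ hmem1
              have hmem2 : n ((g'.1, η.2.1 - (a - b), x) : GTrip G) ≠ 0 := by
                rw [← h22]; exact hn1
              have hge : b ≤ η.2.1 - (a - b) := hbmin _ hmem2
              have heq : η.2.1 = a := by omega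
              exact Prod.ext hη1 (Prod.ext heq h22)
        · rw [if_neg h22, zero_mul]
    rw [hval] at hq0
    exact mul_ne_zero haS (fun h => hbS (star_eq_zero.mp h)) hq0
  -- Claim B : range determines source x
  have claimB : ∀ g₀ : GTrip G, n g₀ ≠ 0 → g₀.2.2 = x →
      ∀ g : GTrip G, n g ≠ 0 → g.1 = g₀.1 → g.2.2 = x := by
    intro g₀ hg₀ hg₀2 g hg hgy
    by_contra hgx
    obtain ⟨h₁, hmem₁, hNmax⟩ := Set.exists_max_image {h : GTrip G | n h ≠ 0 ∧ h.2.2 = x}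
      (fun h : GTrip G => if hd : ∃ i, h.1.edges i ≠ g₀.1.edges i then hd.choose else 0)
      (Tfin x) ⟨g₀, ⟨hg₀, hg₀2⟩⟩
    set N : ℕ := if hd : ∃ i, h₁.1.edges i ≠ g₀.1.edges i then hd.choose else 0 with hN
    have hsep : ∀ h : GTrip G, n h ≠ 0 → h.2.2 = x →
        h.1 ∈ Zset ⟨N + 1, g₀.1.rng, g₀.1.edges, fun i _ => g₀.1.compat i, fun _ => rfl⟩ →
        h.1 = g₀.1 := by
      intro h h1 h2 h3
      by_contra hneq
      have hd : ∃ i, h.1.edges i ≠ g₀.1.edges i := by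
        by_contra hc; push_neg at hc; exact hneq (InfPath.ext' hc)
      have hle : (if hd' : ∃ i, h.1.edges i ≠ g₀.1.edges i then hd'.choose else 0) ≤ N :=
        hNmax h ⟨h1, h2⟩
      rw [dif_pos hd] at hle
      have hlt : hd.choose < N + 1 := Nat.lt_succ_of_le hle
      exact hd.choose_spec (h3.1 hd.choose hlt)
    have hdD : Set.indicator (unitSet (Zset
        ⟨N + 1, g₀.1.rng, g₀.1.edges, fun i _ => g₀.1.compat i, fun _ => rfl⟩))
        (1 : GTrip G → R) ∈ Diag R G :=
      Submodule.subset_span ⟨_, rfl⟩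
    have hpD := (hn.2 _ hdD).2
    obtain ⟨a, haS, hamax⟩ := Set.exists_max_image {k : ℤ | n ((g₀.1, k, x) : GTrip G) ≠ 0}
      id (lagfin _ _) ⟨g₀.2.1, by rw [Set.mem_setOf_eq, ← hg₀2]; exact hg₀⟩
    obtain ⟨b, hbS, hbmin⟩ := Set.exists_min_image {k : ℤ | n ((g₀.1, k, g.2.2) : GTrip G) ≠ 0}
      id (lagfin _ _) ⟨g.2.1, by rw [Set.mem_setOf_eq, ← hgy]; exact hg⟩
    simp only [Set.mem_setOf_eq, id_eq] at haS hbS hamax hbmin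
    have hp0 : conv (conv (starf n) (Set.indicator (unitSet (Zset
        ⟨N + 1, g₀.1.rng, g₀.1.edges, fun i _ => g₀.1.compat i, fun _ => rfl⟩))
        (1 : GTrip G → R))) n ((x, b - a, g.2.2) : GTrip G) = 0 := by
      by_contra hc
      have hu := diag_supp hpD _ hc
      exact hgx (congrArg (fun z : GTrip G => z.2.2) hu)
    have hval : conv (conv (starf n) (Set.indicator (unitSet (Zset
        ⟨N + 1, g₀.1.rng, g₀.1.edges, fun i _ => g₀.1.compat i, fun _ => rfl⟩))
        (1 : GTrip G → R))) n ((x, b - a, g.2.2) : GTrip G) =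
        (star (n ((g₀.1, a, x) : GTrip G)) * Set.indicator (unitSet (Zset
        ⟨N + 1, g₀.1.rng, g₀.1.edges, fun i _ => g₀.1.compat i, fun _ => rfl⟩))
        (1 : GTrip G → R) (unit g₀.1)) * n ((g₀.1, b, g.2.2) : GTrip G) := by
      rw [conv_apply]
      rw [finsum_mem_single' (S := {η : GTrip G | η.1 = ((x, b - a, g.2.2) : GTrip G).1})
        (a := ((x, -a, g₀.1) : GTrip G)) rfl ?_]
      · rw [conv_diag_right (fun z hz => unitSet_supp _ z hz)]
        have e2 : gmul (ginv ((x, -a, g₀.1) : GTrip G)) ((x, b - a, g.2.2) : GTrip G) =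
            ((g₀.1, b, g.2.2) : GTrip G) :=
          Prod.ext rfl (Prod.ext (show -(-a) + (b - a) = b by ring) rfl)
        have e1 : ginv ((x, -a, g₀.1) : GTrip G) = ((g₀.1, a, x) : GTrip G) :=
          Prod.ext rfl (Prod.ext (neg_neg a) rfl)
        rw [e2, show starf n ((x, -a, g₀.1) : GTrip G) =
          star (n (ginv ((x, -a, g₀.1) : GTrip G))) from rfl, e1]
      · intro η hη hη0
        rw [conv_diag_right (fun z hz => unitSet_supp _ z hz)]
        by_cases h1 : n (ginv η) = 0
        · rw [show starf n η = star (n (ginv η)) from rfl, h1, star_zero, zero_mul, zero_mul]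
        · by_cases h2 : Set.indicator (unitSet (Zset
              ⟨N + 1, g₀.1.rng, g₀.1.edges, fun i _ => g₀.1.compat i, fun _ => rfl⟩))
              (1 : GTrip G → R) (unit η.2.2) = 0
          · rw [h2, mul_zero, zero_mul]
          · by_cases h3 : n (gmul (ginv η) ((x, b - a, g.2.2) : GTrip G)) = 0
            · rw [h3, mul_zero]
            · exfalso
              apply hη0
              have hη1 : η.1 = x := hη
              have hginv : ginv η = ((η.2.2, -η.2.1, x) : GTrip G) :=
                Prod.ext rfl (Prod.ext rfl hη1)
              rw [hginv] at h1
              have hzl : η.2.2 ∈ Zset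
                  ⟨N + 1, g₀.1.rng, g₀.1.edges, fun i _ => g₀.1.compat i, fun _ => rfl⟩ := by
                by_contra hc
                exact h2 (Set.indicator_of_notMem
                  (fun hm => hc (unit_mem_unitSet_iff.mp hm)) _)
              have hηy : η.2.2 = g₀.1 := hsep ((η.2.2, -η.2.1, x) : GTrip G) h1 rfl hzl
              have hm1 : n ((g₀.1, -η.2.1, x) : GTrip G) ≠ 0 := by rw [← hηy]; exact h1
              have hle : -η.2.1 ≤ a := hamax _ hm1
              have hgm : gmul (ginv η) ((x, b - a, g.2.2) : GTrip G) =
                  ((g₀.1, -η.2.1 + (b - a), g.2.2) : GTrip G) :=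
                Prod.ext hηy (Prod.ext rfl rfl)
              rw [hgm] at h3
              have hge : b ≤ -η.2.1 + (b - a) := hbmin _ h3
              have heq : η.2.1 = -a := by omega
              exact Prod.ext hη1 (Prod.ext heq hηy)
    rw [hval] at hp0
    have hdy : Set.indicator (unitSet (Zset
        ⟨N + 1, g₀.1.rng, g₀.1.edges, fun i _ => g₀.1.compat i, fun _ => rfl⟩))
        (1 : GTrip G → R) (unit g₀.1) = (1 : R) := by
      rw [unitSet_ind_unit, if_pos ⟨fun i _ => rfl, rfl⟩]
    rw [hdy, mul_one] at hp0
    exact mul_ne_zero (fun h => haS (star_eq_zero.mp h)) hbS hp0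
  intro g hg
  rw [hα]
  constructor
  · intro h2
    exact claimA g hTne.choose hg hg₀n h2 hg₀x
  · intro h1
    exact claimB hTne.choose hg₀n hg₀x g hg h1
end AuxNp
end LPA

open LPA in
/-- For an isolated `x ∈ dom(n)`: `n p_x n^* = n n^* p_{α_n(x)}` and
`n p_x = p_{α_n(x)} n`. -/
theorem np_isolated {G : DirGraph} (hrf : RowFinite G) (hns : NoSources G)
    {R : Type} [CommRing R] [IsDomain R] [StarRing R]
    (n : GTrip G → R) (hn : IsNormalizer n) (x : InfPath G)
    (hx : IsOpen ({x} : Set (InfPath G))) (hxd : x ∈ domSet n) :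
    conv (conv n (ppt R x)) (starf n) =
        conv (conv n (starf n)) (ppt R (alphaFun n x)) ∧
      conv n (ppt R x) = conv (ppt R (alphaFun n x)) n := by
  have K := key_iff hn hx hxd
  have hm : ∀ η : GTrip G, conv n (ppt R x) η = if η.2.2 = x then n η else 0 :=
    fun η => conv_ppt_right n x η
  constructor
  · funext γ
    have hR : conv (conv n (starf n)) (ppt R (alphaFun n x)) γ =
        if γ.2.2 = alphaFun n x then conv n (starf n) γ else 0 :=
      conv_ppt_right _ _ γ
    by_cases hγ : γ.2.2 = alphaFun n x
    · rw [hR, if_pos hγ]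
      show (∑ᶠ η ∈ {η : GTrip G | η.1 = γ.1}, conv n (ppt R x) η * starf n (gmul (ginv η) γ)) =
        ∑ᶠ η ∈ {η : GTrip G | η.1 = γ.1}, n η * starf n (gmul (ginv η) γ)
      refine finsum_mem_congr rfl ?_
      intro η _
      rw [hm η]
      by_cases h22 : η.2.2 = x
      · rw [if_pos h22]
      · rw [if_neg h22, zero_mul]
        symm
        by_cases hn0 : n η = 0
        · rw [hn0, zero_mul]
        · rw [starf_gmul]
          have h0 : n ((γ.2.2, η.2.1 - γ.2.1, η.2.2) : GTrip G) = 0 := by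
            by_contra hc
            exact h22 ((K _ hc).mpr hγ)
          rw [h0, star_zero, mul_zero]
    · rw [hR, if_neg hγ, conv_apply]
      apply finsum_mem_of_eqOn_zero
      intro η _
      show conv n (ppt R x) η * starf n (gmul (ginv η) γ) = 0
      rw [hm η]
      by_cases h22 : η.2.2 = x
      · rw [if_pos h22]
        by_cases hn0 : n η = 0
        · rw [hn0, zero_mul]
        · rw [starf_gmul]
          have h0 : n ((γ.2.2, η.2.1 - γ.2.1, η.2.2) : GTrip G) = 0 := by
            by_contra hc
            exact hγ ((K _ hc).mp h22)
          rw [h0, star_zero, mul_zero]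
      · rw [if_neg h22, zero_mul]
  · funext g
    rw [show conv n (ppt R x) g = if g.2.2 = x then n g else 0 from conv_ppt_right n x g,
      conv_diag_left (ppt_supp (alphaFun n x)), ppt_unit]
    by_cases hn0 : n g = 0
    · rw [hn0, mul_zero]
      by_cases h1 : g.2.2 = x
      · rw [if_pos h1]
      · rw [if_neg h1]
    · by_cases h22 : g.2.2 = x
      · rw [if_pos h22, if_pos ((K g hn0).mp h22), one_mul]
      · rw [if_neg h22, if_neg (fun hc => h22 ((K g hn0).mpr hc)), zero_mul]
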